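/- Let λ_1 ≥ λ_2 ≥ λ_3 ≥ λ_4 be integers such that among λ_1+3, λ_2+2, λ_3+1, λ_4 the number of even integers is not exactly 2. Then the character of the irreducible GL_4(ℂ)-representation with highest weight (λ_1,λ_2,λ_3,λ_4) vanishes at every diagonal element of the form (t_1, t_2, −t_1, −t_2) with t_1, t_2 nonzero and t_1² ≠ t_2². -/

import Mathlib

open Finset

/-- The character (Schur function) of the irreducible representation of
`GL_N(ℂ)` with highest weight `λ₁ ≥ ⋯ ≥ λ_N`, as a ratio of the Weyl
numerator determinant `det (x_j ^ (λ_i + N - i))` by the Vandermonde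
determinant `∏_{i<j} (x_i - x_j)`. -/
noncomputable def schurChar (N : ℕ) (lam : Fin N → ℤ) (x : Fin N → ℂ) : ℂ :=
  (Matrix.of fun i j : Fin N => x j ^ (lam i + (N : ℤ) - 1 - (i : ℕ))).det /
    ∏ i : Fin N, ∏ j ∈ Ioi i, (x i - x j)

/-- If among `λ₁+3, λ₂+2, λ₃+1, λ₄` the number of even integers is not
exactly 2, then the `GL₄(ℂ)` character with highest weight
`λ₁ ≥ λ₂ ≥ λ₃ ≥ λ₄` vanishes at every `(t₁, t₂, -t₁, -t₂)` with
`t₁, t₂` nonzero and `t₁² ≠ t₂²`. -/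
lemma det_fin_four' (M : Matrix (Fin 4) (Fin 4) ℂ) :
    M.det =
      M 0 0 * (M 1 1 * (M 2 2 * M 3 3 - M 2 3 * M 3 2)
        - M 1 2 * (M 2 1 * M 3 3 - M 2 3 * M 3 1)
        + M 1 3 * (M 2 1 * M 3 2 - M 2 2 * M 3 1))
      - M 0 1 * (M 1 0 * (M 2 2 * M 3 3 - M 2 3 * M 3 2)
        - M 1 2 * (M 2 0 * M 3 3 - M 2 3 * M 3 0)
        + M 1 3 * (M 2 0 * M 3 2 - M 2 2 * M 3 0))
      + M 0 2 * (M 1 0 * (M 2 1 * M 3 3 - M 2 3 * M 3 1)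
        - M 1 1 * (M 2 0 * M 3 3 - M 2 3 * M 3 0)
        + M 1 3 * (M 2 0 * M 3 1 - M 2 1 * M 3 0))
      - M 0 3 * (M 1 0 * (M 2 1 * M 3 2 - M 2 2 * M 3 1)
        - M 1 1 * (M 2 0 * M 3 2 - M 2 2 * M 3 0)
        + M 1 2 * (M 2 0 * M 3 1 - M 2 1 * M 3 0)) := by
  rw [Matrix.det_succ_row_zero, Fin.sum_univ_four]
  simp [Matrix.det_fin_three, Matrix.submatrix, Fin.succAbove, Fin.succ, Fin.castSucc,
    Fin.lt_def, Fin.castAdd, Fin.castLE, show ((3:Fin 4):ℕ)=3 from rfl,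
    show ((2:Fin 4):ℕ)=2 from rfl]
  ring

lemma det_aux (a b : Fin 4 → ℂ) (ε : Fin 4 → Bool)
    (h : ¬ ((ε 0).toNat + (ε 1).toNat + (ε 2).toNat + (ε 3).toNat = 2)) :
    (Matrix.of fun i j : Fin 4 =>
      ![a i, b i, (if ε i then 1 else -1) * a i, (if ε i then 1 else -1) * b i] j).det = 0 := by
  rw [det_fin_four']
  cases h0 : ε 0 <;> cases h1 : ε 1 <;> cases h2 : ε 2 <;> cases h3 : ε 3 <;>
    simp [h0, h1, h2, h3] at h ⊢ <;> ring

theorem gl4_char_vanishes (lam : Fin 4 → ℤ) (hlam : Antitone lam)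
    (hpar : (univ.filter fun i : Fin 4 =>
        Even (lam i + (3 - (i : ℕ) : ℤ))).card ≠ 2)
    (t₁ t₂ : ℂ) (ht₁ : t₁ ≠ 0) (ht₂ : t₂ ≠ 0) (hne : t₁ ^ 2 ≠ t₂ ^ 2) :
    schurChar 4 lam ![t₁, t₂, -t₁, -t₂] = 0 := by
  set e : Fin 4 → ℤ := fun i => lam i + (4 : ℤ) - 1 - (i : ℕ) with he
  have hee : ∀ i : Fin 4, e i = lam i + (3 - (i : ℕ) : ℤ) := fun i => by simp [he]; ring
  have hcount : ¬ ((decide (Even (e 0))).toNat + (decide (Even (e 1))).toNat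
      + (decide (Even (e 2))).toNat + (decide (Even (e 3))).toNat = 2) := by
    intro hc
    apply hpar
    rw [Finset.card_filter, Fin.sum_univ_four]
    simp only [← hee]
    by_cases p0 : Even (e 0) <;> by_cases p1 : Even (e 1) <;>
      by_cases p2 : Even (e 2) <;> by_cases p3 : Even (e 3) <;>
      simp [p0, p1, p2, p3] at hc ⊢ <;> omega
  have hM : (Matrix.of fun i j : Fin 4 =>
      (![t₁, t₂, -t₁, -t₂] : Fin 4 → ℂ) j ^ (lam i + ((4 : ℕ) : ℤ) - 1 - (i : ℕ))) =
      (Matrix.of fun i j : Fin 4 =>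
        ![t₁ ^ e i, t₂ ^ e i,
          (if decide (Even (e i)) then 1 else -1) * t₁ ^ e i,
          (if decide (Even (e i)) then 1 else -1) * t₂ ^ e i] j) := by
    funext i j
    have hexp : lam i + (4 : ℤ) - 1 - (i : ℕ) = e i := by simp [he]
    fin_cases j
    · simp [hexp]
    · simp [hexp]
    · rcases Int.even_or_odd (e i) with hp | hp
      · simp [hexp, hp, hp.neg_zpow]
      · simp [hexp, hp.neg_zpow, Int.not_even_iff_odd.mpr hp]
    · rcases Int.even_or_odd (e i) with hp | hp
      · simp [hexp, hp, hp.neg_zpow]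
      · simp [hexp, hp.neg_zpow, Int.not_even_iff_odd.mpr hp]
  rw [schurChar, hM, det_aux _ _ _ hcount, zero_div]
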